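/- arXiv:2105.07353 — 2 statements merged into one kernel-verified Lean document; each statement's English description precedes it below -/
import Mathlib

section
/- Let G = (V, E) be a symmetric connected graph on vertices V = {1,...,N} without self-loops, meaning that for any distinct i, j there exists a path i = p_1 → p_2 → ... → p_{d_ij} = j with each (p_k, p_{k+1}) ∈ E, where d_ij is the length of a shortest such path. Let d(G) = max over (i,j) with i ≠ j of d_ij be the diameter and E^c = (V × V) \ E. Then for any points x^1, ..., x^N in R^d, one has L_G ∑_{i,j=1}^N |x^i - x^j|^2 ≤ ∑_{(i,j) ∈ E} |x^i - x^j|^2, where L_G = 1/(1 + d(G)·|E^c|). -/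
open Finset

lemma norm_sub_le_darts_sum {N d : ℕ} (G : SimpleGraph (Fin N))
    (x : Fin N → EuclideanSpace ℝ (Fin d)) {i j : Fin N} (w : G.Walk i j) :
    ‖x i - x j‖ ≤ (w.darts.map (fun e => ‖x e.toProd.1 - x e.toProd.2‖)).sum := by
  induction w with
  | nil => simp
  | @cons u v w' h w ih =>
    simp only [SimpleGraph.Walk.darts_cons, List.map_cons, List.sum_cons]
    exact le_trans (norm_sub_le_norm_sub_add_norm_sub (x u) (x v) (x w')) (add_le_add le_rfl ih)

/-- Lemma 2.2 (graph connectivity lemma): for a symmetric connected graph `G` on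
`{1,...,N}` without self-loops, with diameter `d(G)` and edge-complement `E^c`,
`L_G ∑_{i,j} ‖x i - x j‖² ≤ ∑_{(i,j)∈E} ‖x i - x j‖²` where
`L_G = 1/(1 + d(G)·|E^c|)`. -/
theorem graph_connectivity_variance_bound (N d : ℕ) (hN : 0 < N)
    (G : SimpleGraph (Fin N)) [DecidableRel G.Adj] (hG : G.Connected)
    (x : Fin N → EuclideanSpace ℝ (Fin d)) :
    (1 + (G.diam : ℝ) *
        ((Finset.univ.filter (fun p : Fin N × Fin N => ¬ G.Adj p.1 p.2)).card : ℝ))⁻¹ *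
        ∑ i : Fin N, ∑ j : Fin N, ‖x i - x j‖ ^ 2 ≤
      ∑ p ∈ Finset.univ.filter (fun p : Fin N × Fin N => G.Adj p.1 p.2),
        ‖x p.1 - x p.2‖ ^ 2 := by
  haveI : Nonempty (Fin N) := ⟨⟨0, hN⟩⟩
  set S := ∑ p ∈ Finset.univ.filter (fun p : Fin N × Fin N => G.Adj p.1 p.2),
      ‖x p.1 - x p.2‖ ^ 2 with hS
  have hSnn : 0 ≤ S := Finset.sum_nonneg fun _ _ => by positivity
  have hediam : G.ediam ≠ ⊤ := by
    obtain ⟨u, v, huv⟩ := SimpleGraph.exists_edist_eq_ediam_of_finite (G := G)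
    rw [← huv]
    exact SimpleGraph.edist_ne_top_iff_reachable.mpr (hG u v)
  -- key pointwise bound
  have key : ∀ i j : Fin N, i ≠ j → ‖x i - x j‖ ^ 2 ≤ (G.diam : ℝ) * S := by
    intro i j hij
    obtain ⟨w0, hw0⟩ := hG.exists_walk_length_eq_dist i j
    set w := w0.bypass with hw
    have hwpath : w.IsPath := w0.bypass_isPath
    have hwlen : w.length ≤ G.diam := le_trans
      (le_trans w0.length_bypass_le hw0.le) (SimpleGraph.dist_le_diam hediam)
    have hnodup : w.darts.Nodup := by
      have := hwpath.edges_nodup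
      rw [SimpleGraph.Walk.edges] at this
      exact this.of_map _
    set t := w.darts.toFinset with ht
    have hcard : (t.card : ℝ) ≤ (G.diam : ℝ) := by
      have : t.card ≤ w.length := by
        rw [ht, List.toFinset_card_of_nodup hnodup, SimpleGraph.Walk.length_darts]
      exact_mod_cast le_trans this hwlen
    have h1 : ‖x i - x j‖ ≤ ∑ e ∈ t, ‖x e.toProd.1 - x e.toProd.2‖ := by
      rw [ht, List.sum_toFinset _ hnodup]
      exact norm_sub_le_darts_sum G x w
    have h2 : ‖x i - x j‖ ^ 2 ≤ (t.card : ℝ) * ∑ e ∈ t, ‖x e.toProd.1 - x e.toProd.2‖ ^ 2 := by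
      calc ‖x i - x j‖ ^ 2 ≤ (∑ e ∈ t, ‖x e.toProd.1 - x e.toProd.2‖) ^ 2 := by
            apply pow_le_pow_left₀ (norm_nonneg _) h1
        _ ≤ (t.card : ℝ) * ∑ e ∈ t, ‖x e.toProd.1 - x e.toProd.2‖ ^ 2 := by
            have := sq_sum_le_card_mul_sum_sq (s := t)
              (f := fun e : G.Dart => ‖x e.toProd.1 - x e.toProd.2‖)
            exact_mod_cast this
    have h3 : ∑ e ∈ t, ‖x e.toProd.1 - x e.toProd.2‖ ^ 2 ≤ S := by
      have him := Finset.sum_image (s := t) (g := SimpleGraph.Dart.toProd)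
        (f := fun p : Fin N × Fin N => ‖x p.1 - x p.2‖ ^ 2)
        (fun a _ b _ h => SimpleGraph.Dart.toProd_injective h)
      rw [hS, ← him]
      apply Finset.sum_le_sum_of_subset_of_nonneg
      · intro p hp
        simp only [Finset.mem_image] at hp
        obtain ⟨e, he, rfl⟩ := hp
        simp [e.adj]
      · intro p _ _; positivity
    calc ‖x i - x j‖ ^ 2 ≤ (t.card : ℝ) * ∑ e ∈ t, ‖x e.toProd.1 - x e.toProd.2‖ ^ 2 := h2
      _ ≤ (G.diam : ℝ) * S := by
          apply mul_le_mul hcard h3 (Finset.sum_nonneg fun _ _ => by positivity)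
            (Nat.cast_nonneg _)
  -- total bound
  set Ec := Finset.univ.filter (fun p : Fin N × Fin N => ¬ G.Adj p.1 p.2) with hEc
  have hT : ∑ i : Fin N, ∑ j : Fin N, ‖x i - x j‖ ^ 2 ≤
      (1 + (G.diam : ℝ) * (Ec.card : ℝ)) * S := by
    have hsplit : ∑ i : Fin N, ∑ j : Fin N, ‖x i - x j‖ ^ 2 =
        S + ∑ p ∈ Ec, ‖x p.1 - x p.2‖ ^ 2 := by
      rw [hS, hEc, ← Finset.sum_product', Finset.univ_product_univ]
      exact (Finset.sum_filter_add_sum_filter_not Finset.univ _ _).symm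
    rw [hsplit]
    have hEcb : ∑ p ∈ Ec, ‖x p.1 - x p.2‖ ^ 2 ≤ (Ec.card : ℝ) * ((G.diam : ℝ) * S) := by
      calc ∑ p ∈ Ec, ‖x p.1 - x p.2‖ ^ 2 ≤ ∑ _p ∈ Ec, (G.diam : ℝ) * S := by
            apply Finset.sum_le_sum
            intro p _
            by_cases hpq : p.1 = p.2
            · rw [hpq]; simp; positivity
            · exact key p.1 p.2 hpq
        _ = (Ec.card : ℝ) * ((G.diam : ℝ) * S) := by rw [Finset.sum_const, nsmul_eq_mul]
    nlinarith [hEcb]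
  have hc : 0 < 1 + (G.diam : ℝ) * (Ec.card : ℝ) := by positivity
  rw [inv_mul_le_iff₀ hc]
  calc ∑ i : Fin N, ∑ j : Fin N, ‖x i - x j‖ ^ 2 ≤ (1 + (G.diam : ℝ) * (Ec.card : ℝ)) * S := hT
    _ = (1 + (G.diam : ℝ) * (Ec.card : ℝ)) * S := rfl
end

section
/- Let ψ : [0,∞) → [0,∞) satisfy ψ(r) ≥ ψ_min > 0 for all r, let G_ψ = (V, E_ψ) be a symmetric connected graph on {1,...,N} with constant L := 1/(1 + d(G_ψ)|E_ψ^c|), where d(G_ψ) is the graph diameter and E_ψ^c the edge-complement. Then for any positions x^1,...,x^N and velocities v^1,...,v^N in R^d: -∑_{(i,j)∈E_ψ} ψ(|x^j - x^i|) |v^i - v^j|^2 ≤ -ψ_min · L · ∑_{i,j=1}^N |v^i - v^j|^2. -/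
open Finset

section Aux

variable {N : ℕ} {V : Type*} [Fintype V] [DecidableEq V]
variable {G : SimpleGraph V} [DecidableRel G.Adj]
variable {E : Type*} [NormedAddCommGroup E]

lemma norm_list_sum_le (l : List E) : ‖l.sum‖ ≤ (l.map (fun x => ‖x‖)).sum := by
  induction l with
  | nil => simp
  | cons a l ih =>
    simp only [List.sum_cons, List.map_cons]
    exact (norm_add_le _ _).trans (by linarith)

/-- Telescoping along a walk. -/
lemma walk_darts_sum (v : V → E) {i j : V} (w : G.Walk i j) :
    (w.darts.map (fun d => v d.toProd.1 - v d.toProd.2)).sum = v i - v j := by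
  induction w with
  | nil => simp
  | cons h w ih =>
    rw [SimpleGraph.Walk.darts_cons, List.map_cons, List.sum_cons, ih]
    abel

/-- Key graph connectivity bound: for any vertices `i j`,
`‖v i - v j‖² ≤ diam * ∑_{edges} ‖v a - v b‖²`. -/
lemma sq_norm_le_diam_mul (hG : G.Connected) (v : V → E) (i j : V) :
    ‖v i - v j‖ ^ 2 ≤ (G.diam : ℝ) *
      ∑ p ∈ Finset.univ.filter (fun p : V × V => G.Adj p.1 p.2),
        ‖v p.1 - v p.2‖ ^ 2 := by
  have hne : Nonempty V := ⟨i⟩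
  set S := ∑ p ∈ Finset.univ.filter (fun p : V × V => G.Adj p.1 p.2),
      ‖v p.1 - v p.2‖ ^ 2 with hS
  have hS0 : 0 ≤ S := Finset.sum_nonneg fun p _ => by positivity
  -- a shortest walk, then its bypass, a path
  obtain ⟨w, hw⟩ := hG.exists_walk_length_eq_dist i j
  set p := w.bypass with hp
  have hpath : p.IsPath := w.bypass_isPath
  have hlen : p.length ≤ G.dist i j := hw ▸ w.length_bypass_le
  -- dist ≤ diam
  have hetop : G.ediam ≠ ⊤ := by
    obtain ⟨u₁, u₂, hu⟩ := SimpleGraph.exists_edist_eq_ediam_of_finite (G := G)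
    rw [← hu]
    exact (SimpleGraph.edist_ne_top_iff_reachable).mpr (hG u₁ u₂)
  have hdiam : p.length ≤ G.diam := hlen.trans (SimpleGraph.dist_le_diam hetop)
  -- darts are nodup
  have hnodup : p.darts.Nodup :=
    SimpleGraph.Walk.darts_nodup_of_support_nodup hpath.support_nodup
  set f : G.Dart → ℝ := fun d => ‖v d.toProd.1 - v d.toProd.2‖
  -- sum of squares over darts ≤ S
  have hdartsum : ∑ e ∈ p.darts.toFinset, f e ^ 2 ≤ S := by
    rw [hS]
    have himg : ∑ e ∈ p.darts.toFinset, f e ^ 2 =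
        ∑ q ∈ p.darts.toFinset.image (fun d : G.Dart => d.toProd),
          ‖v q.1 - v q.2‖ ^ 2 := by
      rw [Finset.sum_image (fun a _ b _ h => SimpleGraph.Dart.toProd_injective h)]
    rw [himg]
    apply Finset.sum_le_sum_of_subset_of_nonneg
    · intro q hq
      simp only [Finset.mem_image, List.mem_toFinset] at hq
      obtain ⟨e, _, rfl⟩ := hq
      simp only [Finset.mem_filter, Finset.mem_univ, true_and]
      exact e.adj
    · intro q _ _; positivity
  -- Cauchy–Schwarz
  have htel : (p.darts.map (fun d => v d.toProd.1 - v d.toProd.2)).sum = v i - v j :=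
    walk_darts_sum v p
  have hnorm : ‖v i - v j‖ ≤ ∑ e ∈ p.darts.toFinset, f e := by
    rw [← htel, List.sum_toFinset _ hnodup]
    calc ‖(p.darts.map (fun d => v d.toProd.1 - v d.toProd.2)).sum‖
        ≤ ((p.darts.map (fun d => v d.toProd.1 - v d.toProd.2)).map
            (fun x => ‖x‖)).sum := norm_list_sum_le _
      _ = (p.darts.map f).sum := by rw [List.map_map]; rfl
  have hcard : (p.darts.toFinset.card : ℝ) = p.length := by
    rw [List.toFinset_card_of_nodup hnodup, SimpleGraph.Walk.length_darts]
  calc ‖v i - v j‖ ^ 2 ≤ (∑ e ∈ p.darts.toFinset, f e) ^ 2 := by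
        apply pow_le_pow_left₀ (norm_nonneg _) hnorm
    _ ≤ (p.darts.toFinset.card : ℝ) * ∑ e ∈ p.darts.toFinset, f e ^ 2 := by
        exact sq_sum_le_card_mul_sum_sq
    _ ≤ (G.diam : ℝ) * S := by
        apply mul_le_mul _ hdartsum (Finset.sum_nonneg fun e _ => by positivity)
          (Nat.cast_nonneg _)
        rw [hcard]
        exact_mod_cast hdiam

end Aux

/-- Combining the lower bound `ψ ≥ ψ_min > 0` with the graph connectivity lemma:
`-∑_{(i,j)∈E_ψ} ψ(‖x j - x i‖)‖v i - v j‖² ≤ -ψ_min L ∑_{i,j} ‖v i - v j‖²`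
where `L = 1/(1 + d(G_ψ)|E_ψ^c|)`. -/
theorem weighted_dissipation_lower_bound (N d : ℕ) (hN : 0 < N)
    (ψ : ℝ → ℝ) (ψmin : ℝ) (hψmin : 0 < ψmin) (hψ : ∀ r, 0 ≤ r → ψmin ≤ ψ r)
    (G : SimpleGraph (Fin N)) [DecidableRel G.Adj] (hG : G.Connected)
    (x v : Fin N → EuclideanSpace ℝ (Fin d)) :
    -(∑ p ∈ Finset.univ.filter (fun p : Fin N × Fin N => G.Adj p.1 p.2),
        ψ ‖x p.2 - x p.1‖ * ‖v p.1 - v p.2‖ ^ 2) ≤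
      -(ψmin * (1 + (G.diam : ℝ) *
          ((Finset.univ.filter (fun p : Fin N × Fin N => ¬ G.Adj p.1 p.2)).card : ℝ))⁻¹ *
        ∑ i : Fin N, ∑ j : Fin N, ‖v i - v j‖ ^ 2) := by
  set S := ∑ p ∈ Finset.univ.filter (fun p : Fin N × Fin N => G.Adj p.1 p.2),
      ‖v p.1 - v p.2‖ ^ 2 with hSdef
  set c := ((Finset.univ.filter (fun p : Fin N × Fin N => ¬ G.Adj p.1 p.2)).card : ℝ)
    with hcdef
  set D := (G.diam : ℝ) with hDdef
  have hS0 : 0 ≤ S := Finset.sum_nonneg fun p _ => by positivity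
  have hc0 : (0:ℝ) ≤ c := Nat.cast_nonneg _
  have hD0 : (0:ℝ) ≤ D := Nat.cast_nonneg _
  have hpos : (0:ℝ) < 1 + D * c := by positivity
  rw [neg_le_neg_iff]
  -- step 1 : ψmin * S ≤ weighted sum
  have h1 : ψmin * S ≤ ∑ p ∈ Finset.univ.filter (fun p : Fin N × Fin N => G.Adj p.1 p.2),
      ψ ‖x p.2 - x p.1‖ * ‖v p.1 - v p.2‖ ^ 2 := by
    rw [hSdef, Finset.mul_sum]
    apply Finset.sum_le_sum
    intro p _
    exact mul_le_mul_of_nonneg_right (hψ _ (norm_nonneg _)) (by positivity)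
  -- step 2 : T ≤ (1 + D * c) * S
  have hkey : ∀ i j : Fin N, ‖v i - v j‖ ^ 2 ≤ D * S :=
    fun i j => sq_norm_le_diam_mul hG v i j
  have h2 : (∑ i : Fin N, ∑ j : Fin N, ‖v i - v j‖ ^ 2) ≤ (1 + D * c) * S := by
    have hT : (∑ i : Fin N, ∑ j : Fin N, ‖v i - v j‖ ^ 2)
        = ∑ p : Fin N × Fin N, ‖v p.1 - v p.2‖ ^ 2 := by
      rw [← Finset.univ_product_univ, Finset.sum_product]
    rw [hT, ← Finset.sum_filter_add_sum_filter_not Finset.univ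
      (fun p : Fin N × Fin N => G.Adj p.1 p.2)]
    have hbad : (∑ p ∈ Finset.univ.filter (fun p : Fin N × Fin N => ¬ G.Adj p.1 p.2),
        ‖v p.1 - v p.2‖ ^ 2) ≤ c * (D * S) := by
      rw [hcdef]
      calc (∑ p ∈ Finset.univ.filter (fun p : Fin N × Fin N => ¬ G.Adj p.1 p.2),
            ‖v p.1 - v p.2‖ ^ 2)
          ≤ ∑ _p ∈ Finset.univ.filter (fun p : Fin N × Fin N => ¬ G.Adj p.1 p.2),
            D * S := Finset.sum_le_sum fun p _ => hkey p.1 p.2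
        _ = _ := by rw [Finset.sum_const, nsmul_eq_mul]
    have := add_le_add_left hbad S
    calc S + (∑ p ∈ Finset.univ.filter (fun p : Fin N × Fin N => ¬ G.Adj p.1 p.2),
            ‖v p.1 - v p.2‖ ^ 2) ≤ S + c * (D * S) := by linarith
      _ = (1 + D * c) * S := by ring
  calc ψmin * (1 + D * c)⁻¹ * (∑ i : Fin N, ∑ j : Fin N, ‖v i - v j‖ ^ 2)
      ≤ ψmin * (1 + D * c)⁻¹ * ((1 + D * c) * S) := by
        apply mul_le_mul_of_nonneg_left h2 (by positivity)
    _ = ψmin * S := by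
        field_simp
    _ ≤ _ := h1
end
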